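/- arXiv:1401.0604 — 2 statements merged into one kernel-verified Lean document; each statement's English description precedes it below -/
import Mathlib

section
/- Let $M \geq 1$, let $w : \{1,\dots,N\} \to \mathbb{R}_{>0}$ and $h_s : \{1,\dots,N\} \to \mathbb{R}_{>0}$ for $s = 1,\dots,M$. Define the discrete probability distributions $\pi(k) = w(k)\prod_{s=1}^M h_s(k) / \sum_l w(l)\prod_{s=1}^M h_s(l)$ and, for $1 \leq \ell \leq M$, $\pi^\ell(k) = w(k)\prod_{s=1}^\ell h_s(k) / \sum_l w(l)\prod_{s=1}^\ell h_s(l)$. Suppose there exist constants $A \geq 0$ and $c > 0$ such that $\max_{k,l}(h_s(k)/h_s(l) - 1) \leq A e^{-cs}$ for all $s$. Then the Kullback-Leibler divergence satisfies $\mathrm{KL}(\pi \| \pi^\ell) \leq A \frac{e^{-c(\ell+1)} - e^{-c(M+1)}}{1 - e^{-c}}$. -/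
open Finset Real

theorem stmt_0 (N M ℓ : ℕ) (hN : 1 ≤ N) (hM : 1 ≤ M) (hℓ1 : 1 ≤ ℓ) (hℓM : ℓ ≤ M)
    (w : Fin N → ℝ) (hw : ∀ k, 0 < w k)
    (h : ℕ → Fin N → ℝ) (hh : ∀ s k, 0 < h s k)
    (A c : ℝ) (hA : 0 ≤ A) (hc : 0 < c)
    (hbound : ∀ s ∈ Finset.Icc 1 M, ∀ k l : Fin N,
      h s k / h s l - 1 ≤ A * Real.exp (-c * s)) :
    (∑ k : Fin N,
      ((w k * ∏ s ∈ Finset.Icc 1 M, h s k) /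
          (∑ l : Fin N, w l * ∏ s ∈ Finset.Icc 1 M, h s l)) *
        Real.log
          (((w k * ∏ s ∈ Finset.Icc 1 M, h s k) /
              (∑ l : Fin N, w l * ∏ s ∈ Finset.Icc 1 M, h s l)) /
            ((w k * ∏ s ∈ Finset.Icc 1 ℓ, h s k) /
              (∑ l : Fin N, w l * ∏ s ∈ Finset.Icc 1 ℓ, h s l))))
      ≤ A * (Real.exp (-c * (ℓ + 1)) - Real.exp (-c * (M + 1))) / (1 - Real.exp (-c)) := by
  have hne : (Finset.univ : Finset (Fin N)).Nonempty := ⟨⟨0, hN⟩, Finset.mem_univ _⟩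
  set ZM : ℝ := ∑ l : Fin N, w l * ∏ s ∈ Finset.Icc 1 M, h s l with hZM
  set Zl : ℝ := ∑ l : Fin N, w l * ∏ s ∈ Finset.Icc 1 ℓ, h s l with hZl
  have hPMpos : ∀ k, 0 < ∏ s ∈ Finset.Icc 1 M, h s k :=
    fun k => Finset.prod_pos fun s _ => hh s k
  have hPlpos : ∀ k, 0 < ∏ s ∈ Finset.Icc 1 ℓ, h s k :=
    fun k => Finset.prod_pos fun s _ => hh s k
  have hRpos : ∀ k, 0 < ∏ s ∈ Finset.Ioc ℓ M, h s k :=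
    fun k => Finset.prod_pos fun s _ => hh s k
  have hZMpos : 0 < ZM :=
    Finset.sum_pos (fun k _ => mul_pos (hw k) (hPMpos k)) hne
  have hZlpos : 0 < Zl :=
    Finset.sum_pos (fun k _ => mul_pos (hw k) (hPlpos k)) hne
  have hsplit : ∀ k, (∏ s ∈ Finset.Icc 1 M, h s k)
      = (∏ s ∈ Finset.Icc 1 ℓ, h s k) * ∏ s ∈ Finset.Ioc ℓ M, h s k := by
    intro k
    have e : ∀ m : ℕ, Finset.Icc 1 m = Finset.Ioc 0 m := by
      intro m; ext x; simp; omega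
    rw [e, e, ← Finset.prod_Ioc_consecutive _ (Nat.zero_le ℓ) hℓM]
  set B : ℝ := ∑ s ∈ Finset.Ioc ℓ M, A * Real.exp (-c * s) with hB
  have hkey : ∀ k l : Fin N, (∏ s ∈ Finset.Ioc ℓ M, h s k)
      ≤ Real.exp B * ∏ s ∈ Finset.Ioc ℓ M, h s l := by
    intro k l
    have step : ∀ s ∈ Finset.Ioc ℓ M,
        h s k ≤ Real.exp (A * Real.exp (-c * s)) * h s l := by
      intro s hs
      obtain ⟨hs1, hs2⟩ := Finset.mem_Ioc.mp hs
      have hs' : s ∈ Finset.Icc 1 M := Finset.mem_Icc.mpr ⟨le_trans hℓ1 hs1.le, hs2⟩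
      have hb := hbound s hs' k l
      have h1 : h s k ≤ (1 + A * Real.exp (-c * s)) * h s l := by
        have := (div_le_iff₀ (hh s l)).mp (by linarith : h s k / h s l ≤ 1 + A * Real.exp (-c * s))
        linarith
      have h2 : 1 + A * Real.exp (-c * s) ≤ Real.exp (A * Real.exp (-c * s)) := by
        have := Real.add_one_le_exp (A * Real.exp (-c * s))
        linarith
      calc h s k ≤ (1 + A * Real.exp (-c * s)) * h s l := h1
        _ ≤ Real.exp (A * Real.exp (-c * s)) * h s l :=
            mul_le_mul_of_nonneg_right h2 (hh s l).le
    calc (∏ s ∈ Finset.Ioc ℓ M, h s k)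
        ≤ ∏ s ∈ Finset.Ioc ℓ M, (Real.exp (A * Real.exp (-c * s)) * h s l) :=
          Finset.prod_le_prod (fun s _ => (hh s k).le) step
      _ = Real.exp B * ∏ s ∈ Finset.Ioc ℓ M, h s l := by
          rw [Finset.prod_mul_distrib, hB, Real.exp_sum]
  have hratio : ∀ k : Fin N, (∏ s ∈ Finset.Ioc ℓ M, h s k) * Zl ≤ Real.exp B * ZM := by
    intro k
    calc (∏ s ∈ Finset.Ioc ℓ M, h s k) * Zl
        = ∑ x : Fin N, (∏ s ∈ Finset.Ioc ℓ M, h s k) * (w x * ∏ s ∈ Finset.Icc 1 ℓ, h s x) := by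
          rw [hZl, Finset.mul_sum]
      _ ≤ ∑ x : Fin N, (Real.exp B * ∏ s ∈ Finset.Ioc ℓ M, h s x) * (w x * ∏ s ∈ Finset.Icc 1 ℓ, h s x) :=
          Finset.sum_le_sum fun x _ =>
            mul_le_mul_of_nonneg_right (hkey k x) (mul_pos (hw x) (hPlpos x)).le
      _ = Real.exp B * ZM := by
          rw [hZM, Finset.mul_sum]
          refine Finset.sum_congr rfl fun x _ => ?_
          rw [hsplit x]; ring
  have hlog : ∀ k : Fin N,
      Real.log (((w k * ∏ s ∈ Finset.Icc 1 M, h s k) / ZM) /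
        ((w k * ∏ s ∈ Finset.Icc 1 ℓ, h s k) / Zl)) ≤ B := by
    intro k
    have harg : ((w k * ∏ s ∈ Finset.Icc 1 M, h s k) / ZM) /
        ((w k * ∏ s ∈ Finset.Icc 1 ℓ, h s k) / Zl)
        = ((∏ s ∈ Finset.Ioc ℓ M, h s k) * Zl) / ZM := by
      rw [hsplit k]
      field_simp [(hw k).ne', (hPlpos k).ne', hZMpos.ne', hZlpos.ne']
    rw [harg, Real.log_le_iff_le_exp (div_pos (mul_pos (hRpos k) hZlpos) hZMpos),
      div_le_iff₀ hZMpos]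
    exact hratio k
  have hsum1 : ∑ k : Fin N, (w k * ∏ s ∈ Finset.Icc 1 M, h s k) / ZM = 1 := by
    rw [← Finset.sum_div, ← hZM, div_self hZMpos.ne']
  have main : (∑ k : Fin N,
      ((w k * ∏ s ∈ Finset.Icc 1 M, h s k) / ZM) *
        Real.log (((w k * ∏ s ∈ Finset.Icc 1 M, h s k) / ZM) /
            ((w k * ∏ s ∈ Finset.Icc 1 ℓ, h s k) / Zl))) ≤ B := by
    calc (∑ k : Fin N,
        ((w k * ∏ s ∈ Finset.Icc 1 M, h s k) / ZM) *
          Real.log (((w k * ∏ s ∈ Finset.Icc 1 M, h s k) / ZM) /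
              ((w k * ∏ s ∈ Finset.Icc 1 ℓ, h s k) / Zl)))
        ≤ ∑ k : Fin N, ((w k * ∏ s ∈ Finset.Icc 1 M, h s k) / ZM) * B :=
          Finset.sum_le_sum fun k _ =>
            mul_le_mul_of_nonneg_left (hlog k)
              (div_pos (mul_pos (hw k) (hPMpos k)) hZMpos).le
      _ = B := by rw [← Finset.sum_mul, hsum1, one_mul]
  refine main.trans ?_
  -- geometric sum computation
  have hr1 : Real.exp (-c) < 1 := Real.exp_lt_one_iff.mpr (by linarith)
  have hIoc : Finset.Ioc ℓ M = Finset.Ico (ℓ + 1) (M + 1) := by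
    ext x; simp [Nat.lt_succ_iff, Nat.succ_le_iff]
  have hpow : ∀ n : ℕ, Real.exp (-c * n) = (Real.exp (-c)) ^ n := by
    intro n
    rw [← Real.exp_nat_mul]
    ring_nf
  have hBeq : B = A * (Real.exp (-c * (ℓ + 1)) - Real.exp (-c * (M + 1))) / (1 - Real.exp (-c)) := by
    rw [hB, ← Finset.mul_sum, hIoc]
    have := geom_sum_Ico hr1.ne (Nat.succ_le_succ hℓM)
    have hsum : (∑ s ∈ Finset.Ico (ℓ + 1) (M + 1), Real.exp (-c * s))
        = ∑ s ∈ Finset.Ico (ℓ + 1) (M + 1), (Real.exp (-c)) ^ s :=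
      Finset.sum_congr rfl fun s _ => hpow s
    rw [hsum, this]
    have e1 : Real.exp (-c * (ℓ + 1)) = Real.exp (-c) ^ (ℓ + 1) := by
      rw [← hpow]; push_cast; ring_nf
    have e2 : Real.exp (-c * (M + 1)) = Real.exp (-c) ^ (M + 1) := by
      rw [← hpow]; push_cast; ring_nf
    rw [e1, e2]
    have hne1 : Real.exp (-c) - 1 ≠ 0 := by nlinarith
    have hne2 : (1 : ℝ) - Real.exp (-c) ≠ 0 := by nlinarith
    field_simp
    ring
  rw [hBeq] at *
end

section
/- Let $\pi$ be a probability density on $\mathcal{X}^T$ and let $\phi$ be a probability density on an extended space $\Omega = \mathcal{X}^{NT} \times \{1,\dots,N\}^T$ of the form $\phi(\mathbf{x}_{1:T}, b_{1:T}) = \frac{\pi(x_{1:T}^{b_{1:T}})}{N^T} \, \phi_c(\mathbf{x}^{-b}_{1:T} \mid x^{b_{1:T}}_{1:T}, b_{1:T})$, where $\phi_c(\cdot \mid \cdot)$ is a conditional probability density of the remaining coordinates. Then, under $\phi$, the marginal distribution of the extracted trajectory $x_{1:T}^{b_{1:T}} = (x_1^{b_1}, \dots, x_T^{b_T})$ is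 exactly $\pi$. -/
open MeasureTheory Finset
open scoped ENNReal

section Aux

variable {X : Type*} [MeasurableSpace X] {N T : ℕ}

lemma recomb_measurable (b : Fin T → Fin N) :
    Measurable (fun p : (Fin T → X) × (∀ t : Fin T, {i : Fin N // i ≠ b t} → X) =>
      (fun t i => if h : i = b t then p.1 t else p.2 t ⟨i, h⟩ : Fin T → Fin N → X)) := by
  refine measurable_pi_lambda _ fun t => measurable_pi_lambda _ fun i => ?_
  by_cases h : i = b t
  · simpa [h, Function.comp_def] using (measurable_pi_apply t).comp (measurable_fst :
      Measurable fun p : (Fin T → X) × (∀ t : Fin T, {i : Fin N // i ≠ b t} → X) => p.1)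
  · simpa [h, Function.comp_def] using ((measurable_pi_apply (⟨i, h⟩ : {i : Fin N // i ≠ b t})).comp
      (measurable_pi_apply t)).comp (measurable_snd :
      Measurable fun p : (Fin T → X) × (∀ t : Fin T, {i : Fin N // i ≠ b t} → X) => p.2)

lemma recomb_measurePreserving (m : Measure X) [SigmaFinite m] (b : Fin T → Fin N) :
    MeasurePreserving
      (fun p : (Fin T → X) × (∀ t : Fin T, {i : Fin N // i ≠ b t} → X) =>
        (fun t i => if h : i = b t then p.1 t else p.2 t ⟨i, h⟩ : Fin T → Fin N → X))
      ((Measure.pi fun _ : Fin T => m).prod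
        (Measure.pi fun t : Fin T => Measure.pi fun _ : {i : Fin N // i ≠ b t} => m))
      (Measure.pi fun _ : Fin T => Measure.pi fun _ : Fin N => m) := by
  refine ⟨recomb_measurable b, ?_⟩
  refine (Measure.pi_eq_generateFrom
    (C := fun _ => Set.pi Set.univ '' Set.pi Set.univ fun _ : Fin N => {s : Set X | MeasurableSet s})
    (fun _ => generateFrom_pi) (fun _ => isPiSystem_pi)
    (fun _ => Measure.FiniteSpanningSetsIn.pi fun _ => m.toFiniteSpanningSetsIn) ?_).symm
  intro s hs
  choose v hv hsv using hs
  have hmeas : ∀ t i, MeasurableSet (v t i) := fun t i => hv t i (Set.mem_univ i)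
  have hse : s = fun t => Set.pi Set.univ (v t) := funext fun t => (hsv t).symm
  subst hse
  have hpre : (fun p : (Fin T → X) × (∀ t : Fin T, {i : Fin N // i ≠ b t} → X) =>
        (fun t i => if h : i = b t then p.1 t else p.2 t ⟨i, h⟩ : Fin T → Fin N → X)) ⁻¹'
        (Set.pi Set.univ fun t => Set.pi Set.univ (v t)) =
      (Set.pi Set.univ fun t => v t (b t)) ×ˢ
        (Set.pi Set.univ fun t => Set.pi Set.univ
          fun i : {i : Fin N // i ≠ b t} => v t i.1) := by
    ext ⟨z, u⟩
    simp only [Set.mem_preimage, Set.mem_pi, Set.mem_univ, true_implies, Set.mem_prod]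
    constructor
    · intro h
      refine ⟨fun t => ?_, fun t i => ?_⟩
      · have := h t (b t); simpa using this
      · have := h t i.1; simpa [i.2] using this
    · rintro ⟨h1, h2⟩ t i
      by_cases h : i = b t
      · subst h; simpa using h1 t
      · simpa [h] using h2 t ⟨i, h⟩
  rw [Measure.map_apply (recomb_measurable b)
    (MeasurableSet.univ_pi fun t => MeasurableSet.univ_pi fun i => hmeas t i), hpre,
    Measure.prod_prod]
  simp only [Measure.pi_pi]
  rw [← Finset.prod_mul_distrib]
  refine Finset.prod_congr rfl fun t _ => ?_
  have hsub : ∀ f : Fin N → ℝ≥0∞,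
      f (b t) * ∏ i : {i : Fin N // i ≠ b t}, f i.1 = ∏ i, f i := by
    intro f
    rw [← Finset.prod_subtype (p := fun i : Fin N => i ≠ b t)
      ((Finset.univ : Finset (Fin N)).erase (b t)) (fun i => by simp [Finset.mem_erase]) f]
    exact Finset.mul_prod_erase Finset.univ f (Finset.mem_univ _)
  exact hsub fun i => m (v t i)

end Aux

theorem stmt_17 {X : Type*} [MeasurableSpace X] (m : Measure X) [SigmaFinite m]
    (N T : ℕ) (hN : 1 ≤ N)
    (π : (Fin T → X) → ℝ≥0∞) (hπmeas : Measurable π)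
    (hπ : ∫⁻ z, π z ∂(Measure.pi fun _ : Fin T => m) = 1)
    (φc : (Fin T → Fin N → X) → (Fin T → Fin N) → ℝ≥0∞)
    (hφcmeas : ∀ b, Measurable (fun x => φc x b))
    -- `φc (· | x^{b}, b)` is a conditional probability density of the remaining
    -- particle coordinates, given the extracted trajectory `z` and the indices `b`
    (hφc : ∀ (b : Fin T → Fin N) (z : Fin T → X),
      ∫⁻ u : ∀ t : Fin T, {i : Fin N // i ≠ b t} → X,
          φc (fun t i => if h : i = b t then z t else u t ⟨i, h⟩) b
        ∂(Measure.pi fun t : Fin T =>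
            Measure.pi fun _ : {i : Fin N // i ≠ b t} => m) = 1)
    (g : (Fin T → X) → ℝ≥0∞) (hg : Measurable g) :
    ∑ b : Fin T → Fin N,
      ∫⁻ x,
          g (fun t => x t (b t)) *
            (π (fun t => x t (b t)) / (N : ℝ≥0∞) ^ T * φc x b)
        ∂(Measure.pi fun _ : Fin T => Measure.pi fun _ : Fin N => m)
      = ∫⁻ z, g z * π z ∂(Measure.pi fun _ : Fin T => m) := by
  set c : ℝ≥0∞ := (N : ℝ≥0∞) ^ T with hc
  have hc0 : c ≠ 0 := pow_ne_zero _ (by exact_mod_cast Nat.one_le_iff_ne_zero.mp hN)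
  have hctop : c ≠ ∞ := ENNReal.pow_ne_top (ENNReal.natCast_ne_top N)
  have key : ∀ b : Fin T → Fin N,
      ∫⁻ x, g (fun t => x t (b t)) * (π (fun t => x t (b t)) / c * φc x b)
        ∂(Measure.pi fun _ : Fin T => Measure.pi fun _ : Fin N => m)
      = (∫⁻ z, g z * π z ∂(Measure.pi fun _ : Fin T => m)) / c := by
    intro b
    have hmp := recomb_measurePreserving m b
    have hcoord : Measurable fun x : Fin T → Fin N → X => (fun t => x t (b t)) :=
      measurable_pi_lambda _ fun t => (measurable_pi_apply (b t)).comp (measurable_pi_apply t)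
    have hF : Measurable fun x : Fin T → Fin N → X =>
        g (fun t => x t (b t)) * (π (fun t => x t (b t)) / c * φc x b) :=
      (hg.comp hcoord).mul (((hπmeas.comp hcoord).div measurable_const).mul (hφcmeas b))
    have hm2 : Measurable fun p : (Fin T → X) × (∀ t : Fin T, {i : Fin N // i ≠ b t} → X) =>
        φc (fun t i => if h : i = b t then p.1 t else p.2 t ⟨i, h⟩) b :=
      (hφcmeas b).comp (recomb_measurable b)
    calc
      ∫⁻ x, g (fun t => x t (b t)) * (π (fun t => x t (b t)) / c * φc x b)
          ∂(Measure.pi fun _ : Fin T => Measure.pi fun _ : Fin N => m)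
        = ∫⁻ p : (Fin T → X) × (∀ t : Fin T, {i : Fin N // i ≠ b t} → X),
            g p.1 * (π p.1 / c) *
              φc (fun t i => if h : i = b t then p.1 t else p.2 t ⟨i, h⟩) b
          ∂((Measure.pi fun _ : Fin T => m).prod
            (Measure.pi fun t : Fin T =>
              Measure.pi fun _ : {i : Fin N // i ≠ b t} => m)) := by
          rw [← hmp.lintegral_comp hF]
          refine lintegral_congr fun p => ?_
          simp [mul_assoc]
      _ = ∫⁻ z, ∫⁻ u, g z * (π z / c) *
              φc (fun t i => if h : i = b t then z t else u t ⟨i, h⟩) b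
            ∂(Measure.pi fun t : Fin T =>
              Measure.pi fun _ : {i : Fin N // i ≠ b t} => m)
          ∂(Measure.pi fun _ : Fin T => m) :=
        MeasureTheory.lintegral_prod _
          (((hg.comp measurable_fst).mul
            ((hπmeas.comp measurable_fst).div measurable_const)).mul hm2).aemeasurable
      _ = ∫⁻ z, g z * (π z / c) ∂(Measure.pi fun _ : Fin T => m) := by
          refine lintegral_congr fun z => ?_
          have hm1 : Measurable fun u : ∀ t : Fin T, {i : Fin N // i ≠ b t} → X =>
              φc (fun t i => if h : i = b t then z t else u t ⟨i, h⟩) b :=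
            (hφcmeas b).comp ((recomb_measurable b).comp measurable_prodMk_left)
          rw [lintegral_const_mul'' _ hm1.aemeasurable, hφc b z, mul_one]
      _ = (∫⁻ z, g z * π z ∂(Measure.pi fun _ : Fin T => m)) / c := by
          simp_rw [div_eq_mul_inv, ← mul_assoc]
          rw [lintegral_mul_const'' (f := fun z => g z * π z) _ ((hg.mul hπmeas).aemeasurable), ← div_eq_mul_inv]
  rw [Finset.sum_congr rfl fun b _ => key b]
  rw [Finset.sum_const, nsmul_eq_mul, Finset.card_univ, Fintype.card_fun,
    Fintype.card_fin, Fintype.card_fin]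
  push_cast
  rw [← hc, mul_comm, ENNReal.div_mul_cancel hc0 hctop]
end
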